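/- The sun graph S(n; λ_1,…,λ_n) has a perfect matching (respectively, an almost perfect matching) if and only if the subgraph induced on the set of vertices {v_i : λ_i is even}, i.e., on the beginnings of the rays of even length, has a perfect matching (respectively, an almost perfect matching). -/

import Mathlib

noncomputable section

open SimpleGraph

/-- The chromatic symmetric function of a finite simple graph, as a formal power
series in countably many commuting variables `x_0, x_1, x_2, …`: the coefficient of the
monomial `∏ i, x_i ^ d i` is the number of proper colourings `κ : V → ℕ` in which colour `i`
is used exactly `d i` times. -/
def csf {V : Type} [Fintype V] (G : SimpleGraph V) : MvPowerSeries ℕ ℚ :=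
  fun d => (Nat.card {κ : V → ℕ //
      (∀ u v : V, G.Adj u v → κ u ≠ κ v) ∧
      ∀ i : ℕ, Nat.card {v : V // κ v = i} = d i} : ℚ)

/-- The elementary symmetric function `e_k` as a formal power series. -/
def esym (k : ℕ) : MvPowerSeries ℕ ℚ :=
  fun d => if (∀ i ∈ d.support, d i = 1) ∧ (d.sum fun _ v => v) = k then 1 else 0

/-- `e_λ` for a partition `λ` given as a multiset of parts. -/
def esymM (μ : Multiset ℕ) : MvPowerSeries ℕ ℚ :=
  (μ.map esym).prod

/-- A symmetric function is `e`-positive if it is a finite nonnegative linear combination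
of the elementary symmetric functions `e_λ`, `λ` a partition (all parts positive). -/
def EPositive (f : MvPowerSeries ℕ ℚ) : Prop :=
  ∃ c : Multiset ℕ →₀ ℚ, (∀ μ, 0 ≤ c μ) ∧ (∀ μ ∈ c.support, 0 ∉ μ) ∧
    f = c.sum fun μ a => a • esymM μ

/-- The path `P_k` on `k` vertices. -/
def pathG (k : ℕ) : SimpleGraph (Fin k) :=
  SimpleGraph.fromRel (fun i j => (j : ℕ) = (i : ℕ) + 1)

/-- The cycle `C_m` on `m` vertices (for `m = 2` this is a single edge, i.e. `P_2`). -/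
def cycleG (m : ℕ) : SimpleGraph (Fin m) :=
  SimpleGraph.fromRel (fun i j => (j : ℕ) = ((i : ℕ) + 1) % m)

/-- Auxiliary relation for sun graphs: body relation on `Fin n`, plus rays
`P_{lam i}` attached at vertex `i`, the leaf `⟨i,0⟩` of ray `i` being joined to `i`. -/
def sunRel (n : ℕ) (lam : Fin n → ℕ) (body : Fin n → Fin n → Prop) :
    (Fin n ⊕ ((i : Fin n) × Fin (lam i))) → (Fin n ⊕ ((i : Fin n) × Fin (lam i))) → Prop
  | Sum.inl i, Sum.inl i' => body i i'
  | Sum.inl i, Sum.inr p => p.1 = i ∧ (p.2 : ℕ) = 0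
  | Sum.inr p, Sum.inr q => p.1 = q.1 ∧ (q.2 : ℕ) = (p.2 : ℕ) + 1
  | _, _ => False

/-- The sun graph `S(n; λ_1, …, λ_n)`: a cycle `C_n` with a path `P_{λ_i}` (a *ray*)
joined by an edge to the `i`-th cycle vertex, for each `i`. -/
def sunGraph (n : ℕ) (lam : Fin n → ℕ) :
    SimpleGraph (Fin n ⊕ ((i : Fin n) × Fin (lam i))) :=
  SimpleGraph.fromRel (sunRel n lam (fun i i' => (i' : ℕ) = ((i : ℕ) + 1) % n))

/-- The complete sun graph `S̄(n; λ_1, …, λ_n)`: as `sunGraph`, but with complete body `K_n`. -/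
def completeSunGraph (n : ℕ) (lam : Fin n → ℕ) :
    SimpleGraph (Fin n ⊕ ((i : Fin n) × Fin (lam i))) :=
  SimpleGraph.fromRel (sunRel n lam (fun i i' => i ≠ i'))

/-- The spider `S(μ_1, …, μ_d)`: `d` paths (legs) `P_{μ_i}`, each joined at a leaf to a
common centre vertex. -/
def spiderGraph (d : ℕ) (mu : Fin d → ℕ) :
    SimpleGraph (Unit ⊕ ((i : Fin d) × Fin (mu i))) :=
  SimpleGraph.fromRel (fun a b => match a, b with
    | Sum.inl _, Sum.inr p => (p.2 : ℕ) = 0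
    | Sum.inr p, Sum.inr q => p.1 = q.1 ∧ (q.2 : ℕ) = (p.2 : ℕ) + 1
    | _, _ => False)

/-- The graph obtained from a body graph `H` on `Fin n` by joining each body vertex `i`
by an edge to a chosen vertex `u i` of a graph `Gs i`. -/
def attachGraph {n : ℕ} {Vs : Fin n → Type} (H : SimpleGraph (Fin n))
    (Gs : ∀ i, SimpleGraph (Vs i)) (u : ∀ i, Vs i) :
    SimpleGraph (Fin n ⊕ ((i : Fin n) × Vs i)) :=
  SimpleGraph.fromRel (fun a b => match a, b with
    | Sum.inl i, Sum.inl i' => H.Adj i i'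
    | Sum.inl i, Sum.inr p => p.1 = i ∧ p.2 = u p.1
    | Sum.inr p, Sum.inr q => ∃ h : p.1 = q.1, (Gs q.1).Adj (h ▸ p.2) q.2
    | _, _ => False)

/-- `G` has a connected partition of type `μ`: a partition of the vertex set all of whose
blocks induce connected subgraphs, the multiset of block sizes being `μ`. -/
def HasConnectedPartition {V : Type} [Fintype V] [DecidableEq V]
    (G : SimpleGraph V) (μ : Multiset ℕ) : Prop :=
  ∃ P : Finpartition (Finset.univ : Finset V),
    (∀ p ∈ P.parts, (G.induce (↑p : Set V)).Connected) ∧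
      P.parts.val.map Finset.card = μ

/-- `G` has a perfect matching: a partition of `V(G)` into pairs of adjacent vertices. -/
def HasPerfectMatching {V : Type} (G : SimpleGraph V) : Prop :=
  ∃ M : G.Subgraph, M.IsPerfectMatching

/-- `G` has an almost perfect matching: a partition of `V(G)` into pairs of adjacent
vertices together with one singleton. -/
def HasAlmostPerfectMatching {V : Type} (G : SimpleGraph V) : Prop :=
  ∃ M : G.Subgraph, M.IsMatching ∧ ∃ v : V, M.verts = {v}ᶜ

/-- The tadpole graph `T_{m,l}`: the cycle `C_m` (vertices `0, …, m-1`, consecutive edges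
plus the chord `{0, m-1}`) with a path on `l` further vertices attached by an edge at
vertex `m-1`.  For `l = 0` this is just `C_m`. -/
def tadpole (m l : ℕ) : SimpleGraph (Fin (m + l)) :=
  SimpleGraph.fromRel (fun i j =>
    (j : ℕ) = (i : ℕ) + 1 ∨ ((i : ℕ) = 0 ∧ (j : ℕ) = m - 1))

/-- Dumbbell with path-parameter `t = l + 1 ≥ 0`: vertices `0, …, m-1` form the cycle `C_m`
(consecutive edges plus chord `{0, m-1}`), vertices `m+t-1, …, m+n+t-2` form the cycle `C_n`
(consecutive edges plus chord `{m+t-1, m+n+t-2}`), and the vertices in between form the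
connecting path; for `t = 0` (i.e. `l = -1`) the two cycles share the vertex `m-1`. -/
def dumbbellAux (m n t : ℕ) : SimpleGraph (Fin (m + n + t - 1)) :=
  SimpleGraph.fromRel (fun i j =>
    (j : ℕ) = (i : ℕ) + 1
      ∨ ((i : ℕ) = 0 ∧ (j : ℕ) = m - 1)
      ∨ ((i : ℕ) = m + t - 1 ∧ (j : ℕ) = m + n + t - 2))

/-- The dumbbell graph `D(m, l, n)` for `l ≥ -1`: cycles `C_m` and `C_n` joined by a path
on `l` vertices (for `l = 1` a single joining vertex, for `l = 0` a joining edge, and for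
`l = -1` the two cycles share a vertex). -/
def dumbbell (m n : ℕ) (l : ℤ) : SimpleGraph (Fin (m + n + (l + 1).toNat - 1)) :=
  dumbbellAux m n (l + 1).toNat

end
section SunPMproof
open SimpleGraph

namespace SunPM

variable {n : ℕ} {lam : Fin n → ℕ}

abbrev SV (n : ℕ) (lam : Fin n → ℕ) := Fin n ⊕ ((i : Fin n) × Fin (lam i))

lemma adj_inl_inr {i : Fin n} {p : (i : Fin n) × Fin (lam i)} :
    (sunGraph n lam).Adj (Sum.inl i) (Sum.inr p) ↔ p.1 = i ∧ (p.2 : ℕ) = 0 := by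
  constructor
  · rintro ⟨-, h | h⟩
    · exact h
    · exact h.elim
  · intro h
    exact ⟨by simp, Or.inl h⟩

lemma adj_inr_inl {i : Fin n} {p : (i : Fin n) × Fin (lam i)} :
    (sunGraph n lam).Adj (Sum.inr p) (Sum.inl i) ↔ p.1 = i ∧ (p.2 : ℕ) = 0 := by
  rw [(sunGraph n lam).adj_comm]; exact adj_inl_inr

lemma adj_inr_inr {p q : (i : Fin n) × Fin (lam i)} :
    (sunGraph n lam).Adj (Sum.inr p) (Sum.inr q) ↔
      p.1 = q.1 ∧ ((q.2 : ℕ) = (p.2 : ℕ) + 1 ∨ (p.2 : ℕ) = (q.2 : ℕ) + 1) := by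
  constructor
  · rintro ⟨hne, ⟨h1, h2⟩ | ⟨h1, h2⟩⟩
    · exact ⟨h1, Or.inl h2⟩
    · exact ⟨h1.symm, Or.inr h2⟩
  · rintro ⟨h1, h2 | h2⟩
    · refine ⟨?_, Or.inl ⟨h1, h2⟩⟩
      rcases p with ⟨pi, pj⟩; rcases q with ⟨qi, qj⟩
      simp only at h1; subst h1
      simp only [ne_eq, Sum.inr.injEq, Sigma.mk.inj_iff, heq_eq_eq, true_and]
      intro h; rw [h] at h2; omega
    · refine ⟨?_, Or.inr ⟨h1.symm, h2⟩⟩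
      rcases p with ⟨pi, pj⟩; rcases q with ⟨qi, qj⟩
      simp only at h1; subst h1
      simp only [ne_eq, Sum.inr.injEq, Sigma.mk.inj_iff, heq_eq_eq, true_and]
      intro h; rw [h] at h2; omega

lemma adj_inl_inl {i i' : Fin n} :
    (sunGraph n lam).Adj (Sum.inl i) (Sum.inl i') ↔
      i ≠ i' ∧ ((i' : ℕ) = ((i : ℕ) + 1) % n ∨ (i : ℕ) = ((i' : ℕ) + 1) % n) := by
  constructor
  · rintro ⟨hne, h | h⟩
    · exact ⟨fun h' => hne (by rw [h']), Or.inl h⟩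
    · exact ⟨fun h' => hne (by rw [h']), Or.inr h⟩
  · rintro ⟨h1, h2 | h2⟩
    · exact ⟨by simpa using h1, Or.inl h2⟩
    · exact ⟨by simpa using h1, Or.inr h2⟩

lemma adj_inr_cases {i : Fin n} {j : ℕ} {hj : j < lam i} {y : SV n lam}
    (h : (sunGraph n lam).Adj (Sum.inr ⟨i, ⟨j, hj⟩⟩) y) :
    (j = 0 ∧ y = Sum.inl i) ∨
    (∃ h1 : j + 1 < lam i, y = Sum.inr ⟨i, ⟨j + 1, h1⟩⟩) ∨
    (0 < j ∧ ∃ h2 : j - 1 < lam i, y = Sum.inr ⟨i, ⟨j - 1, h2⟩⟩) := by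
  rcases y with i' | ⟨qi, qj⟩
  · rw [adj_inr_inl] at h
    obtain ⟨h1, h2⟩ := h
    simp only at h1 h2
    subst h1
    exact Or.inl ⟨h2, rfl⟩
  · rw [adj_inr_inr] at h
    obtain ⟨h1, h2 | h2⟩ := h
    · simp only at h1 h2; subst h1
      refine Or.inr (Or.inl ⟨by omega, ?_⟩)
      congr 2
      exact Fin.val_injective h2
    · simp only at h1 h2; subst h1
      refine Or.inr (Or.inr ⟨by omega, by omega, ?_⟩)
      congr 2
      exact Fin.val_injective (show (qj : ℕ) = j - 1 by omega)

lemma adj_inl_cases {i : Fin n} {y : SV n lam}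
    (h : (sunGraph n lam).Adj (Sum.inl i) y) :
    (∃ i', y = Sum.inl i') ∨ (∃ h0 : 0 < lam i, y = Sum.inr ⟨i, ⟨0, h0⟩⟩) := by
  rcases y with i' | ⟨qi, qj⟩
  · exact Or.inl ⟨i', rfl⟩
  · rw [adj_inl_inr] at h
    obtain ⟨h1, h2⟩ := h
    simp only at h1 h2
    subst h1
    refine Or.inr ⟨lt_of_le_of_lt (Nat.zero_le _) qj.isLt, ?_⟩
    congr 2
    exact Fin.val_injective h2

end SunPM

namespace SunPM

variable {n : ℕ} {lam : Fin n → ℕ}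

/-- `bv i j`: the vertex "below" the `j`-th ray vertex of ray `i`. -/
def bv (i : Fin n) (j : ℕ) (h : j < lam i) : SV n lam :=
  if h0 : j = 0 then Sum.inl i else Sum.inr ⟨i, ⟨j - 1, by omega⟩⟩

lemma rv_eq {i : Fin n} {j j' : ℕ} (h : j = j') {hj : j < lam i} {hj' : j' < lam i} :
    (Sum.inr ⟨i, ⟨j, hj⟩⟩ : SV n lam) = Sum.inr ⟨i, ⟨j', hj'⟩⟩ := by
  subst h; rfl

lemma bv_eq_inl {i : Fin n} {j : ℕ} {h : j < lam i} (h0 : j = 0) :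
    bv i j h = Sum.inl i := dif_pos h0

lemma bv_eq_inr {i : Fin n} {j : ℕ} {h : j < lam i} (h0 : j ≠ 0) {j' : ℕ}
    (hj' : j' = j - 1) (hlt : j' < lam i) : bv i j h = Sum.inr ⟨i, ⟨j', hlt⟩⟩ := by
  subst hj'; simp [bv, h0]

lemma adj_cast {M : (sunGraph n lam).Subgraph} {i : Fin n} {j j' : ℕ}
    {hj : j < lam i} {hj' : j' < lam i} {y : SV n lam} (h : j = j')
    (hadj : M.Adj (Sum.inr ⟨i, ⟨j, hj⟩⟩) y) : M.Adj (Sum.inr ⟨i, ⟨j', hj'⟩⟩) y := by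
  subst h; exact hadj

/-- The matching-forcing lemma along a segment `[s,t]` of ray `i`, by downward
induction from the "top" `t` which is not matched upwards. -/
lemma force {M : (sunGraph n lam).Subgraph} (hM : M.IsMatching) (i : Fin n)
    (s t : ℕ) (ht : t < lam i) (hst : s ≤ t)
    (htop : ∀ (h : t + 1 < lam i), ¬ M.Adj (Sum.inr ⟨i, ⟨t, ht⟩⟩) (Sum.inr ⟨i, ⟨t + 1, h⟩⟩))
    (hverts : ∀ j (h1 : s ≤ j) (h2 : j ≤ t), Sum.inr ⟨i, ⟨j, by omega⟩⟩ ∈ M.verts) :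
    ∀ k, k ≤ t - s →
      (k % 2 = 0 → M.Adj (Sum.inr ⟨i, ⟨t - k, by omega⟩⟩) (bv i (t - k) (by omega))) ∧
      (k % 2 = 1 → M.Adj (Sum.inr ⟨i, ⟨t - k, by omega⟩⟩)
          (Sum.inr ⟨i, ⟨t - (k - 1), by omega⟩⟩)) := by
  intro k
  induction k with
  | zero =>
    intro hk
    refine ⟨fun _ => ?_, fun h => absurd h (by omega)⟩
    obtain ⟨w, hw, -⟩ := hM (hverts t hst le_rfl)
    rcases adj_inr_cases (M.adj_sub hw) with ⟨h0, rfl⟩ | ⟨h1, rfl⟩ | ⟨hp, h2, rfl⟩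
    · rw [bv_eq_inl (by omega)]
      exact hw
    · exact absurd hw (htop h1)
    · rw [bv_eq_inr (i := i) (by omega) rfl (by omega)]
      exact hw
  | succ k ih =>
    intro hk
    have ihk := ih (by omega)
    rcases Nat.even_or_odd k with hke | hko
    · -- k even, k+1 odd: goal is the "up" claim at t-(k+1)
      have h1 : k % 2 = 0 := Nat.even_iff.mp hke
      have hadj := ihk.1 h1
      rw [bv_eq_inr (i := i) (by omega) (show t - (k+1) = t - k - 1 by omega)
        (by omega)] at hadj
      refine ⟨fun h => absurd h (by omega), fun _ => ?_⟩
      exact M.adj_symm hadj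
    · -- k odd, k+1 even: goal is the "down" claim at t-(k+1)
      have h1 : k % 2 = 1 := Nat.odd_iff.mp hko
      have hup := ihk.2 h1
      refine ⟨fun _ => ?_, fun h => absurd h (by omega)⟩
      obtain ⟨w, hw, -⟩ := hM (hverts (t - (k+1)) (by omega) (by omega))
      rcases adj_inr_cases (M.adj_sub hw) with ⟨h0, rfl⟩ | ⟨hlt, rfl⟩ | ⟨hp, h2, rfl⟩
      · rw [bv_eq_inl h0]
        exact hw
      · exfalso
        obtain ⟨w', hw', huniq'⟩ := hM (hverts (t - k) (by omega) (by omega))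
        have e1 := huniq' _ hup
        have e2 := huniq' _ (adj_cast (show t - (k+1) + 1 = t - k by omega) (M.adj_symm hw))
        rw [← e1] at e2
        simp only [Sum.inr.injEq, Sigma.mk.inj_iff, heq_eq_eq, true_and,
          Fin.mk.injEq] at e2
        omega
      · rw [bv_eq_inr (i := i) (by omega) rfl (by omega)]
        exact hw

end SunPM

namespace SunPM

variable {n : ℕ} {lam : Fin n → ℕ} {M : (sunGraph n lam).Subgraph}

lemma adj_cast2 {i i' : Fin n} {j j' l l' : ℕ} {hj : j < lam i} {hj' : j' < lam i}
    {hl : l < lam i'} {hl' : l' < lam i'} (e1 : j = j') (e2 : l = l')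
    (h : M.Adj (Sum.inr ⟨i, ⟨j, hj⟩⟩) (Sum.inr ⟨i', ⟨l, hl⟩⟩)) :
    M.Adj (Sum.inr ⟨i, ⟨j', hj'⟩⟩) (Sum.inr ⟨i', ⟨l', hl'⟩⟩) := by
  subst e1; subst e2; exact h

lemma adj_cast_l {i : Fin n} {j j' : ℕ} {hj : j < lam i} {hj' : j' < lam i}
    {y : SV n lam} (e1 : j = j') (h : M.Adj (Sum.inr ⟨i, ⟨j, hj⟩⟩) y) :
    M.Adj (Sum.inr ⟨i, ⟨j', hj'⟩⟩) y := by subst e1; exact h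

lemma ray_bottom_odd (hM : M.IsMatching) (i : Fin n) (hp : 0 < lam i)
    (hodd : lam i % 2 = 1)
    (hfull : ∀ j (h : j < lam i), Sum.inr ⟨i, ⟨j, h⟩⟩ ∈ M.verts) :
    M.Adj (Sum.inr ⟨i, ⟨0, hp⟩⟩) (Sum.inl i) := by
  have F := (force hM i 0 (lam i - 1) (by omega) (by omega)
    (fun h => absurd h (by omega))
    (fun j h1 h2 => hfull j (by omega)) (lam i - 1) le_rfl).1 (by omega)
  rw [bv_eq_inl (by omega)] at F
  exact adj_cast_l (by omega) F

lemma ray_bottom_even (hM : M.IsMatching) (i : Fin n) (hp : 0 < lam i)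
    (heven : lam i % 2 = 0) (h1 : 1 < lam i)
    (hfull : ∀ j (h : j < lam i), Sum.inr ⟨i, ⟨j, h⟩⟩ ∈ M.verts) :
    M.Adj (Sum.inr ⟨i, ⟨0, hp⟩⟩) (Sum.inr ⟨i, ⟨1, h1⟩⟩) := by
  have F := (force hM i 0 (lam i - 1) (by omega) (by omega)
    (fun h => absurd h (by omega))
    (fun j h1 h2 => hfull j (by omega)) (lam i - 1) le_rfl).2 (by omega)
  exact adj_cast2 (by omega) (by omega) F

lemma ray_bottom_holed_odd (hM : M.IsMatching) (i : Fin n) (j₀ : ℕ) (hj₀ : j₀ < lam i)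
    (hj0odd : j₀ % 2 = 1)
    (hbelow : ∀ j (h : j < lam i), j < j₀ → Sum.inr ⟨i, ⟨j, h⟩⟩ ∈ M.verts)
    (hhole : Sum.inr ⟨i, ⟨j₀, hj₀⟩⟩ ∉ M.verts) :
    M.Adj (Sum.inr ⟨i, ⟨0, by omega⟩⟩) (Sum.inl i) := by
  have htop : ∀ (h : j₀ - 1 + 1 < lam i),
      ¬ M.Adj (Sum.inr ⟨i, ⟨j₀ - 1, by omega⟩⟩) (Sum.inr ⟨i, ⟨j₀ - 1 + 1, h⟩⟩) := by
    intro h hadj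
    exact hhole (rv_eq (hj := h) (hj' := hj₀) (show j₀ - 1 + 1 = j₀ by omega) ▸
      M.edge_vert (M.adj_symm hadj))
  have hv : ∀ j (h1 : 0 ≤ j) (h2 : j ≤ j₀ - 1), Sum.inr ⟨i, ⟨j, by omega⟩⟩ ∈ M.verts := by
    intro j h1 h2
    exact hbelow j (by omega) (by omega)
  have F := (force hM i 0 (j₀ - 1) (by omega) (by omega) htop hv (j₀ - 1) le_rfl).1
    (by omega)
  rw [bv_eq_inl (by omega)] at F
  exact adj_cast_l (by omega) F

lemma ray_bottom_holed_even (hM : M.IsMatching) (i : Fin n) (j₀ : ℕ) (hj₀ : j₀ < lam i)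
    (h0 : 0 < j₀) (hj0even : j₀ % 2 = 0)
    (hbelow : ∀ j (h : j < lam i), j < j₀ → Sum.inr ⟨i, ⟨j, h⟩⟩ ∈ M.verts)
    (hhole : Sum.inr ⟨i, ⟨j₀, hj₀⟩⟩ ∉ M.verts) :
    M.Adj (Sum.inr ⟨i, ⟨0, by omega⟩⟩) (Sum.inr ⟨i, ⟨1, by omega⟩⟩) := by
  have htop : ∀ (h : j₀ - 1 + 1 < lam i),
      ¬ M.Adj (Sum.inr ⟨i, ⟨j₀ - 1, by omega⟩⟩) (Sum.inr ⟨i, ⟨j₀ - 1 + 1, h⟩⟩) := by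
    intro h hadj
    exact hhole (rv_eq (hj := h) (hj' := hj₀) (show j₀ - 1 + 1 = j₀ by omega) ▸
      M.edge_vert (M.adj_symm hadj))
  have hv : ∀ j (h1 : 0 ≤ j) (h2 : j ≤ j₀ - 1), Sum.inr ⟨i, ⟨j, by omega⟩⟩ ∈ M.verts := by
    intro j h1 h2
    exact hbelow j (by omega) (by omega)
  have F := (force hM i 0 (j₀ - 1) (by omega) (by omega) htop hv (j₀ - 1) le_rfl).2
    (by omega)
  exact adj_cast2 (by omega) (by omega) F

lemma hole_parity (hM : M.IsMatching) (i : Fin n) (j₀ : ℕ) (hj₀ : j₀ < lam i)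
    (hverts : ∀ j (h : j < lam i), j ≠ j₀ → Sum.inr ⟨i, ⟨j, h⟩⟩ ∈ M.verts)
    (hhole : Sum.inr ⟨i, ⟨j₀, hj₀⟩⟩ ∉ M.verts) : (lam i - j₀) % 2 = 1 := by
  by_contra h
  have h2 : 2 ≤ lam i - j₀ := by omega
  have F := (force hM i (j₀ + 1) (lam i - 1) (by omega) (by omega)
    (fun h => absurd h (by omega))
    (fun j h1 h2 => hverts j (by omega) (by omega)) (lam i - 2 - j₀) (by omega)).1
    (by omega)
  rw [bv_eq_inr (i := i) (by omega) (show j₀ = lam i - 1 - (lam i - 2 - j₀) - 1 by omega)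
    hj₀] at F
  exact hhole (M.edge_vert (M.adj_symm F))

lemma partner_even (hM : M.IsMatching) {i i' : Fin n}
    (hadj : M.Adj (Sum.inl i) (Sum.inl i')) (hp : 0 < lam i')
    (hfull : ∀ j (h : j < lam i'), Sum.inr ⟨i', ⟨j, h⟩⟩ ∈ M.verts) : lam i' % 2 = 0 := by
  by_contra h
  have hodd : lam i' % 2 = 1 := by omega
  have hb := ray_bottom_odd hM i' hp hodd hfull
  obtain ⟨w, hw, hu⟩ := hM (M.edge_vert (M.adj_symm hadj))
  have e1 := hu _ (M.adj_symm hadj)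
  have e2 := hu _ (M.adj_symm hb)
  rw [← e1] at e2
  exact absurd e2 (by simp)

lemma partner_not_ray (hM : M.IsMatching) {i : Fin n} {hp : 0 < lam i} {h1 : 1 < lam i}
    (h01 : M.Adj (Sum.inr ⟨i, ⟨0, hp⟩⟩) (Sum.inr ⟨i, ⟨1, h1⟩⟩)) :
    ¬ M.Adj (Sum.inl i) (Sum.inr ⟨i, ⟨0, hp⟩⟩) := by
  intro h
  obtain ⟨w, hw, hu⟩ := hM (M.edge_vert h01)
  have e1 := hu _ h01
  have e2 := hu _ (M.adj_symm h)
  rw [← e1] at e2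
  exact absurd e2 (by simp)

lemma inl_partner (hM : M.IsMatching) (i : Fin n) (hi : Sum.inl i ∈ M.verts)
    (hnr : ∀ h0 : 0 < lam i, ¬ M.Adj (Sum.inl i) (Sum.inr ⟨i, ⟨0, h0⟩⟩)) :
    ∃ i', M.Adj (Sum.inl i) (Sum.inl i') := by
  obtain ⟨w, hw, -⟩ := hM hi
  rcases adj_inl_cases (M.adj_sub hw) with ⟨i', rfl⟩ | ⟨h0, rfl⟩
  · exact ⟨i', hw⟩
  · exact absurd hw (hnr h0)

end SunPM

namespace SunPM

variable {n : ℕ} {lam : Fin n → ℕ}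

abbrev evenSet (n : ℕ) (lam : Fin n → ℕ) : Set (SV n lam) :=
  {x | ∃ i : Fin n, x = Sum.inl i ∧ Even (lam i)}

/-- The canonical extension of a matching-relation `R` on cycle vertices to the sun. -/
def extAdj (R : Fin n → Fin n → Prop) : SV n lam → SV n lam → Prop
  | Sum.inl i, Sum.inl i' => R i i'
  | Sum.inl i, Sum.inr p => p.1 = i ∧ (p.2 : ℕ) = 0 ∧ lam i % 2 = 1
  | Sum.inr p, Sum.inl i => p.1 = i ∧ (p.2 : ℕ) = 0 ∧ lam i % 2 = 1
  | Sum.inr p, Sum.inr q => p.1 = q.1 ∧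
      (((q.2 : ℕ) = (p.2 : ℕ) + 1 ∧ (p.2 : ℕ) % 2 = lam p.1 % 2) ∨
       ((p.2 : ℕ) = (q.2 : ℕ) + 1 ∧ (q.2 : ℕ) % 2 = lam q.1 % 2))

lemma ext_unique_inr (R : Fin n → Fin n → Prop) (p : (i : Fin n) × Fin (lam i)) :
    ∃! y, extAdj R (Sum.inr p) y := by
  obtain ⟨i, j⟩ := p
  have hjlt := j.isLt
  by_cases hpar : (j : ℕ) % 2 = lam i % 2
  · have hj1 : (j : ℕ) + 1 < lam i := by omega
    refine ⟨Sum.inr ⟨i, ⟨(j : ℕ) + 1, hj1⟩⟩, ⟨rfl, Or.inl ⟨rfl, hpar⟩⟩, ?_⟩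
    rintro y hy
    cases y with
    | inl i' =>
      obtain ⟨h1, h2, h3⟩ := hy
      simp only at h1 h2 h3
      subst h1
      exfalso; omega
    | inr q =>
      obtain ⟨qi, qj⟩ := q
      obtain ⟨h1, h2⟩ := hy
      simp only at h1 h2
      subst h1
      rcases h2 with ⟨e, -⟩ | ⟨e, hq⟩
      · congr 2
        exact Fin.val_injective e
      · exfalso; omega
  · by_cases hj0 : (j : ℕ) = 0
    · have hodd : lam i % 2 = 1 := by omega
      refine ⟨Sum.inl i, ⟨rfl, hj0, hodd⟩, ?_⟩
      rintro y hy
      cases y with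
      | inl i' =>
        obtain ⟨h1, -, -⟩ := hy
        simp only at h1
        exact congrArg Sum.inl h1.symm
      | inr q =>
        obtain ⟨qi, qj⟩ := q
        obtain ⟨h1, h2⟩ := hy
        simp only at h1 h2
        subst h1
        exfalso
        rcases h2 with ⟨-, hpa⟩ | ⟨e, -⟩
        · exact hpar hpa
        · omega
    · have hlt : (j : ℕ) - 1 < lam i := by omega
      refine ⟨Sum.inr ⟨i, ⟨(j : ℕ) - 1, hlt⟩⟩, ⟨rfl, Or.inr
        ⟨show (j : ℕ) = (j : ℕ) - 1 + 1 by omega,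
         show ((j : ℕ) - 1) % 2 = lam i % 2 by omega⟩⟩, ?_⟩
      rintro y hy
      cases y with
      | inl i' =>
        obtain ⟨-, h2, -⟩ := hy
        exact absurd h2 hj0
      | inr q =>
        obtain ⟨qi, qj⟩ := q
        obtain ⟨h1, h2⟩ := hy
        simp only at h1 h2
        subst h1
        rcases h2 with ⟨-, hpa⟩ | ⟨e, -⟩
        · exact absurd hpa hpar
        · congr 2
          exact Fin.val_injective (show (qj : ℕ) = (j : ℕ) - 1 by omega)

lemma ext_unique_inl_odd (hpos : ∀ i, 0 < lam i) (R : Fin n → Fin n → Prop)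
    (hReven : ∀ i i', R i i' → lam i % 2 = 0) (i : Fin n) (hodd : lam i % 2 = 1) :
    ∃! y : SV n lam, extAdj R (Sum.inl i) y := by
  refine ⟨Sum.inr ⟨i, ⟨0, hpos i⟩⟩, ⟨rfl, rfl, hodd⟩, ?_⟩
  rintro y hy
  cases y with
  | inl i' => exact absurd (hReven i i' hy) (by omega)
  | inr q =>
    obtain ⟨qi, qj⟩ := q
    obtain ⟨h1, h2, -⟩ := hy
    simp only at h1 h2
    subst h1
    congr 2
    exact Fin.val_injective h2

lemma ext_unique_inl_even (R : Fin n → Fin n → Prop) (i : Fin n)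
    (heven : lam i % 2 = 0) (i' : Fin n) (hR : R i i')
    (huniq : ∀ i'', R i i'' → i'' = i') : ∃! y : SV n lam, extAdj R (Sum.inl i) y := by
  refine ⟨Sum.inl i', hR, ?_⟩
  rintro y hy
  cases y with
  | inl i'' => exact congrArg Sum.inl (huniq i'' hy)
  | inr q =>
    obtain ⟨-, -, h3⟩ := hy
    exact absurd h3 (by omega)

end SunPM

namespace SunPM

variable {n : ℕ} {lam : Fin n → ℕ}

def liftR (M' : ((sunGraph n lam).induce (evenSet n lam)).Subgraph) (i i' : Fin n) :
    Prop :=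
  ∃ (hi : Sum.inl i ∈ evenSet n lam) (hi' : Sum.inl i' ∈ evenSet n lam),
    M'.Adj ⟨Sum.inl i, hi⟩ ⟨Sum.inl i', hi'⟩

lemma liftR_even {M' : ((sunGraph n lam).induce (evenSet n lam)).Subgraph}
    {i i' : Fin n} (h : liftR M' i i') : lam i % 2 = 0 := by
  obtain ⟨⟨i₂, he, hev⟩, -, -⟩ := h
  obtain rfl : i = i₂ := Sum.inl.inj he
  exact Nat.even_iff.mp hev

lemma liftR_symm {M' : ((sunGraph n lam).induce (evenSet n lam)).Subgraph}
    {i i' : Fin n} (h : liftR M' i i') : liftR M' i' i := by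
  obtain ⟨hi, hi', hadj⟩ := h
  exact ⟨hi', hi, M'.adj_symm hadj⟩

lemma liftR_adj {M' : ((sunGraph n lam).induce (evenSet n lam)).Subgraph}
    {i i' : Fin n} (h : liftR M' i i') :
    (sunGraph n lam).Adj (Sum.inl i) (Sum.inl i') := by
  obtain ⟨hi, hi', hadj⟩ := h
  exact M'.adj_sub hadj

/-- Extension of a matching of the induced graph on even-ray cycle vertices to a
subgraph of the sun graph, with vertex set `W`. -/
def extSub (M' : ((sunGraph n lam).induce (evenSet n lam)).Subgraph)
    (W : Set (SV n lam)) (hW : ∀ ⦃x y : SV n lam⦄, extAdj (liftR M') x y → x ∈ W) :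
    (sunGraph n lam).Subgraph where
  verts := W
  Adj := extAdj (liftR M')
  adj_sub := by
    rintro (i | p) (i' | q) h
    · exact liftR_adj h
    · obtain ⟨h1, h2, -⟩ := h
      exact adj_inl_inr.mpr ⟨h1, h2⟩
    · obtain ⟨h1, h2, -⟩ := h
      exact adj_inr_inl.mpr ⟨h1, h2⟩
    · obtain ⟨h1, h2⟩ := h
      exact adj_inr_inr.mpr ⟨h1, h2.imp And.left And.left⟩
  edge_vert := fun h => hW h
  symm := by
    refine ⟨?_⟩
    rintro (i | p) (i' | q) h
    · exact liftR_symm h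
    · obtain ⟨h1, h2, h3⟩ := h
      exact ⟨h1, h2, h3⟩
    · obtain ⟨h1, h2, h3⟩ := h
      exact ⟨h1, h2, h3⟩
    · obtain ⟨h1, h2⟩ := h
      rcases h2 with ⟨e, pa⟩ | ⟨e, pa⟩
      · exact ⟨h1.symm, Or.inr ⟨e, pa⟩⟩
      · exact ⟨h1.symm, Or.inl ⟨e, pa⟩⟩

lemma ext_unique_from_M' (M' : ((sunGraph n lam).induce (evenSet n lam)).Subgraph)
    (hM'm : M'.IsMatching) (i : Fin n) (he : lam i % 2 = 0)
    (hmem : (⟨Sum.inl i, ⟨i, rfl, Nat.even_iff.mpr he⟩⟩ : ↥(evenSet n lam)) ∈ M'.verts) :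
    ∃! y : SV n lam, extAdj (liftR M') (Sum.inl i) y := by
  obtain ⟨b, hb, hbu⟩ := hM'm hmem
  obtain ⟨bx, hbmem⟩ := b
  obtain ⟨i', hbe, hbev⟩ := id hbmem
  subst hbe
  refine ext_unique_inl_even (liftR M') i he i'
    ⟨⟨i, rfl, Nat.even_iff.mpr he⟩, ⟨i', rfl, hbev⟩, hb⟩ ?_
  rintro i'' ⟨h1, h2, hadj⟩
  have := hbu ⟨Sum.inl i'', h2⟩ hadj
  simpa using this

lemma backward_perfect (hpos : ∀ i, 0 < lam i)
    (h : HasPerfectMatching ((sunGraph n lam).induce (evenSet n lam))) :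
    HasPerfectMatching (sunGraph n lam) := by
  obtain ⟨M', hM'⟩ := h
  refine ⟨extSub M' Set.univ (fun x y _ => trivial), ?_, fun v => trivial⟩
  intro v hv
  rcases v with i | p
  · by_cases he : lam i % 2 = 0
    · exact ext_unique_from_M' M' hM'.1 i he (hM'.2 _)
    · exact ext_unique_inl_odd hpos (liftR M') (fun a b h => liftR_even h) i (by omega)
  · exact ext_unique_inr (liftR M') p

lemma backward_almost (hpos : ∀ i, 0 < lam i)
    (h : HasAlmostPerfectMatching ((sunGraph n lam).induce (evenSet n lam))) :
    HasAlmostPerfectMatching (sunGraph n lam) := by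
  obtain ⟨M', hM'm, a, hav⟩ := h
  obtain ⟨ax, haxmem⟩ := a
  obtain ⟨istar, rfl, hevstar⟩ := id haxmem
  have key : ∀ y : SV n lam, ¬ extAdj (liftR M') (Sum.inl istar) y := by
    rintro (i' | q) h
    · obtain ⟨hi, hi', hadj⟩ := h
      have hv := M'.edge_vert hadj
      rw [hav] at hv
      exact hv (Subtype.ext rfl)
    · obtain ⟨-, -, h3⟩ := h
      have : lam istar % 2 = 0 := Nat.even_iff.mp hevstar
      omega
  have hW : ∀ ⦃x y : SV n lam⦄, extAdj (liftR M') x y →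
      x ∈ ({Sum.inl istar}ᶜ : Set (SV n lam)) := by
    intro x y h
    simp only [Set.mem_compl_iff, Set.mem_singleton_iff]
    rintro rfl
    exact key y h
  refine ⟨extSub M' _ hW, ?_, Sum.inl istar, rfl⟩
  intro v hv
  rcases v with i | p
  · by_cases he : lam i % 2 = 0
    · refine ext_unique_from_M' M' hM'm i he ?_
      rw [hav]
      intro hcon
      apply hv
      have : Sum.inl i = Sum.inl istar := congrArg Subtype.val hcon
      simp [this]
    · exact ext_unique_inl_odd hpos (liftR M') (fun a b h => liftR_even h) i (by omega)
  · exact ext_unique_inr (liftR M') p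

end SunPM

namespace SunPM

variable {n : ℕ} {lam : Fin n → ℕ} {M : (sunGraph n lam).Subgraph}

lemma inl_even_partner (hM : M.IsMatching) (i : Fin n) (hp : 0 < lam i)
    (he : lam i % 2 = 0) (hi : Sum.inl i ∈ M.verts)
    (hfull : ∀ j (h : j < lam i), Sum.inr ⟨i, ⟨j, h⟩⟩ ∈ M.verts) :
    ∃ i', M.Adj (Sum.inl i) (Sum.inl i') :=
  inl_partner hM i hi
    (fun h0 => partner_not_ray hM (ray_bottom_even hM i h0 he (by omega) hfull))

lemma forward_perfect (hpos : ∀ i, 0 < lam i)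
    (h : HasPerfectMatching (sunGraph n lam)) :
    HasPerfectMatching ((sunGraph n lam).induce (evenSet n lam)) := by
  obtain ⟨M, hMm, hMs⟩ := h
  refine ⟨{ verts := Set.univ, Adj := fun a b => M.Adj a.1 b.1,
            adj_sub := fun h => M.adj_sub h,
            edge_vert := fun _ => trivial,
            symm := ⟨fun a b h => M.adj_symm h⟩ }, ?_, fun v => trivial⟩
  rintro ⟨x, hxmem⟩ -
  obtain ⟨i, rfl, hev⟩ := id hxmem
  have he := Nat.even_iff.mp hev
  obtain ⟨i', hadj⟩ := inl_even_partner hMm i (hpos i) he (hMs _) (fun j hj => hMs _)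
  have he' : lam i' % 2 = 0 := partner_even hMm hadj (hpos i') (fun j hj => hMs _)
  refine ⟨⟨Sum.inl i', ⟨i', rfl, Nat.even_iff.mpr he'⟩⟩, hadj, ?_⟩
  rintro ⟨y, hymem⟩ hy
  obtain ⟨w, hw, hu⟩ := hMm (hMs (Sum.inl i))
  exact Subtype.ext ((hu _ hy).trans (hu _ hadj).symm)

lemma forward_almost (hpos : ∀ i, 0 < lam i)
    (h : HasAlmostPerfectMatching (sunGraph n lam)) :
    HasAlmostPerfectMatching ((sunGraph n lam).induce (evenSet n lam)) := by
  obtain ⟨M, hMm, u, huv⟩ := h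
  have hmem : ∀ x : SV n lam, x ≠ u → x ∈ M.verts := by
    intro x hx; rw [huv]; exact hx
  have hnotmem : u ∉ M.verts := by rw [huv]; simp
  have key : ∃ istar : Fin n, lam istar % 2 = 0 ∧
      (∀ y ∈ evenSet n lam, ¬ M.Adj (Sum.inl istar) y) ∧
      (∀ i, i ≠ istar → lam i % 2 = 0 →
        Sum.inl i ∈ M.verts ∧ ∃ i', lam i' % 2 = 0 ∧ M.Adj (Sum.inl i) (Sum.inl i')) := by
    rcases u with i₀ | ⟨i₀, j₀⟩
    · -- the uncovered vertex is a cycle vertex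
      have hfull : ∀ (i : Fin n) (j : ℕ) (hj : j < lam i),
          Sum.inr ⟨i, ⟨j, hj⟩⟩ ∈ M.verts := fun i j hj => hmem _ (by simp)
      have he₀ : lam i₀ % 2 = 0 := by
        by_contra hodd
        have hb := ray_bottom_odd hMm i₀ (hpos i₀) (by omega) (hfull i₀)
        exact hnotmem (M.edge_vert (M.adj_symm hb))
      refine ⟨i₀, he₀, fun y hy hadj => hnotmem (M.edge_vert hadj), fun i hne he => ?_⟩
      have hiv : Sum.inl i ∈ M.verts := hmem _ (by simp [hne])
      obtain ⟨i', hadj⟩ := inl_even_partner hMm i (hpos i) he hiv (hfull i)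
      exact ⟨hiv, i', partner_even hMm hadj (hpos i') (hfull i'), hadj⟩
    · -- the uncovered vertex is a ray vertex, ray i₀, position j₀
      have hfulli : ∀ (i : Fin n), i ≠ i₀ → ∀ (j : ℕ) (hj : j < lam i),
          Sum.inr ⟨i, ⟨j, hj⟩⟩ ∈ M.verts := by
        intro i hi j hj
        apply hmem
        intro hcon
        rw [Sum.inr.injEq, Sigma.mk.inj_iff] at hcon
        exact hi hcon.1
      have hinlv : ∀ i : Fin n, Sum.inl i ∈ M.verts := fun i => hmem _ (by simp)
      have hbelow : ∀ (j : ℕ) (hj : j < lam i₀), j < (j₀ : ℕ) →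
          Sum.inr ⟨i₀, ⟨j, hj⟩⟩ ∈ M.verts := by
        intro j hj hlt
        apply hmem
        intro hcon
        have h1 : (⟨j, hj⟩ : Fin (lam i₀)) = j₀ := by simpa using hcon
        have h2 : j = (j₀ : ℕ) := congrArg Fin.val h1
        omega
      have hhole : (Sum.inr ⟨i₀, ⟨(j₀ : ℕ), j₀.isLt⟩⟩ : SV n lam) ∉ M.verts := hnotmem
      have hparity : (lam i₀ - (j₀ : ℕ)) % 2 = 1 := by
        refine hole_parity hMm i₀ (j₀ : ℕ) j₀.isLt ?_ hhole
        intro j hj hne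
        apply hmem
        intro hcon
        have h1 : (⟨j, hj⟩ : Fin (lam i₀)) = j₀ := by simpa using hcon
        have h2 : j = (j₀ : ℕ) := congrArg Fin.val h1
        omega
      by_cases he₀ : lam i₀ % 2 = 0
      · -- even ray with a hole at odd position: `v_{i₀}` is matched into its ray
        have hjodd : (j₀ : ℕ) % 2 = 1 := by have := j₀.isLt; omega
        have hb := ray_bottom_holed_odd hMm i₀ (j₀ : ℕ) j₀.isLt hjodd hbelow hhole
        refine ⟨i₀, he₀, ?_, fun i hne he => ?_⟩
        · rintro y ⟨i₂, rfl, -⟩ hadj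
          obtain ⟨w, hw, hu⟩ := hMm (hinlv i₀)
          have e1 := hu _ hadj
          have e2 := hu _ (M.adj_symm hb)
          rw [← e2] at e1
          exact absurd e1 (by simp)
        · have hiv := hinlv i
          obtain ⟨i', hadj⟩ := inl_even_partner hMm i (hpos i) he hiv (hfulli i hne)
          by_cases hii : i' = i₀
          · exact ⟨hiv, i', hii ▸ he₀, hadj⟩
          · exact ⟨hiv, i', partner_even hMm hadj (hpos i') (hfulli i' hii), hadj⟩
      · -- odd ray with a hole at even position: `v_{i₀}` is matched to a cycle vertex
        have hjeven : (j₀ : ℕ) % 2 = 0 := by have := j₀.isLt; omega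
        have hnr₀ : ¬ M.Adj (Sum.inl i₀) (Sum.inr ⟨i₀, ⟨0, hpos i₀⟩⟩) := by
          by_cases hj0 : (j₀ : ℕ) = 0
          · intro hadj
            exact hhole ((rv_eq (hj := hpos i₀) (hj' := j₀.isLt)
              (show 0 = (j₀ : ℕ) by omega)) ▸ M.edge_vert (M.adj_symm hadj))
          · exact partner_not_ray hMm (ray_bottom_holed_even hMm i₀ (j₀ : ℕ) j₀.isLt
              (by omega) hjeven hbelow hhole)
        obtain ⟨i₁, hadj₁⟩ := inl_partner hMm i₀ (hinlv i₀) (fun h0 => hnr₀)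
        have hne₁ : i₁ ≠ i₀ := by
          intro hcon
          exact (M.adj_sub hadj₁).ne (by rw [hcon])
        have he₁ : lam i₁ % 2 = 0 :=
          partner_even hMm hadj₁ (hpos i₁) (hfulli i₁ hne₁)
        refine ⟨i₁, he₁, ?_, fun i hne he => ?_⟩
        · rintro y ⟨i₂, rfl, hev₂⟩ hadj
          obtain ⟨w, hw, hu⟩ := hMm (hinlv i₁)
          have e1 := hu _ hadj
          have e2 := hu _ (M.adj_symm hadj₁)
          rw [← e2] at e1
          have : i₂ = i₀ := by simpa using e1
          subst this
          exact he₀ (Nat.even_iff.mp hev₂)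
        · have hne₀ : i ≠ i₀ := by
            intro hcon
            rw [hcon] at he
            exact he₀ he
          have hiv := hinlv i
          obtain ⟨i', hadj⟩ := inl_even_partner hMm i (hpos i) he hiv (hfulli i hne₀)
          refine ⟨hiv, i', ?_, hadj⟩
          by_cases hii : i' = i₀
          · exfalso
            subst hii
            obtain ⟨w, hw, hu⟩ := hMm (hinlv i')
            have e1 := hu _ (M.adj_symm hadj)
            have e2 := hu _ hadj₁
            rw [← e2] at e1
            exact hne (by simpa using e1)
          · exact partner_even hMm hadj (hpos i') (hfulli i' hii)
  obtain ⟨istar, hestar, hB, hC⟩ := key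
  have hstarmem : Sum.inl istar ∈ evenSet n lam := ⟨istar, rfl, Nat.even_iff.mpr hestar⟩
  refine ⟨{ verts := {(⟨Sum.inl istar, hstarmem⟩ : ↥(evenSet n lam))}ᶜ,
            Adj := fun a b => M.Adj a.1 b.1,
            adj_sub := fun h => M.adj_sub h,
            edge_vert := ?_,
            symm := ⟨fun a b h => M.adj_symm h⟩ }, ?_, ⟨Sum.inl istar, hstarmem⟩, rfl⟩
  · rintro a b h
    simp only [Set.mem_compl_iff, Set.mem_singleton_iff]
    intro hcon
    rw [hcon] at h
    exact hB b.1 b.2 h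
  · rintro ⟨x, hxmem⟩ ha
    obtain ⟨i, rfl, hev⟩ := id hxmem
    have hne : i ≠ istar := by
      intro hcon
      subst hcon
      exact ha (Subtype.ext rfl)
    obtain ⟨hiv, i', he', hadj⟩ := hC i hne (Nat.even_iff.mp hev)
    refine ⟨⟨Sum.inl i', ⟨i', rfl, Nat.even_iff.mpr he'⟩⟩, hadj, ?_⟩
    rintro ⟨y, hymem⟩ hy
    obtain ⟨w, hw, hu⟩ := hMm hiv
    exact Subtype.ext ((hu _ hy).trans (hu _ hadj).symm)

end SunPM

end SunPMproof

/-- The sun `S(n; λ_1, …, λ_n)` has a perfect (resp. almost perfect) matching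
iff the subgraph induced on the beginnings of the rays of even length (the set
`{v_i : λ_i even}`) has a perfect (resp. almost perfect) matching. -/
theorem sun_perfectMatching_iff (n : ℕ) (hn : 3 ≤ n) (lam : Fin n → ℕ)
    (hpos : ∀ i, 0 < lam i) :
    (HasPerfectMatching (sunGraph n lam) ↔
      HasPerfectMatching ((sunGraph n lam).induce
        {x | ∃ i : Fin n, x = Sum.inl i ∧ Even (lam i)})) ∧
    (HasAlmostPerfectMatching (sunGraph n lam) ↔
      HasAlmostPerfectMatching ((sunGraph n lam).induce
        {x | ∃ i : Fin n, x = Sum.inl i ∧ Even (lam i)})) := by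
  exact ⟨⟨SunPM.forward_perfect hpos, SunPM.backward_perfect hpos⟩,
    SunPM.forward_almost hpos, SunPM.backward_almost hpos⟩
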